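/- Let K be a field, let d ≥ 2, and let A ∈ Mat_n(K) be lower triangular with zeroes on the diagonal such that all subdiagonal entries A_{i,i−1} (2 ≤ i ≤ n) are nonzero. Then F = x + (Ax)^{*d} is invertible, its inverse G satisfies G_1 = x_1 and G_i = x_i − (A_{i1} G_1 + A_{i2} G_2 + ... + A_{i,i−1} G_{i−1})^d for 2 ≤ i ≤ n, and deg G_i = d^{i−1} for all i; in particular the inverse of F has degree exactly d^{n−1}. -/

import Mathlib

open MvPolynomial

/-- `G` is the inverse of the polynomial map `F` (composition in both orders is the
identity). -/
def IsPolyInverse {K : Type*} [CommSemiring K] {n : ℕ}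
    (G F : Fin n → MvPolynomial (Fin n) K) : Prop :=
  (∀ i, bind₁ F (G i) = X i) ∧ (∀ i, bind₁ G (F i) = X i)

namespace Aux18

variable {K : Type*} {σ : Type*}

section homize
variable [CommSemiring K]

lemma homComp_monomial (k : ℕ) (m : σ →₀ ℕ) (c : K) :
    homogeneousComponent k (monomial m c)
      = if k = Finsupp.degree m then monomial m c else 0 := by
  classical
  ext d
  rw [coeff_homogeneousComponent]
  by_cases hmd : m = d
  · subst hmd
    by_cases h : k = m.degree <;> simp [h, coeff_monomial, eq_comm]
  · simp only [coeff_monomial, if_neg hmd]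
    split_ifs <;> simp [coeff_monomial, hmd]

/-- homogenization into an extra variable -/
noncomputable def homize : MvPolynomial σ K →ₐ[K] Polynomial (MvPolynomial σ K) :=
  aeval fun i => Polynomial.C (X i) * Polynomial.X

lemma homize_monomial (m : σ →₀ ℕ) (c : K) :
    homize (monomial m c) =
      Polynomial.C (monomial m c) * Polynomial.X ^ (Finsupp.degree m) := by
  classical
  rw [homize, aeval_monomial]
  have h1 : (m.prod fun i k => (Polynomial.C (X i : MvPolynomial σ K) * Polynomial.X) ^ k)
      = Polynomial.C (m.prod fun i k => (X i : MvPolynomial σ K) ^ k)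
        * Polynomial.X ^ (Finsupp.degree m) := by
    rw [Finsupp.prod, Finsupp.prod, Finsupp.degree_apply]
    rw [map_prod, ← Finset.prod_pow_eq_pow_sum]
    rw [← Finset.prod_mul_distrib]
    simp [mul_pow]
  rw [h1, monomial_eq]
  simp [Algebra.smul_def, mul_assoc]

lemma coeff_homize (p : MvPolynomial σ K) (k : ℕ) :
    (homize p).coeff k = homogeneousComponent k p := by
  classical
  induction p using MvPolynomial.monomial_add_induction_on with
  | C a =>
      rw [← monomial_zero', homize_monomial, homComp_monomial]
      simp [Polynomial.coeff_C]
  | monomial_add m c p hm hc ih =>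
      rw [map_add, Polynomial.coeff_add, map_add, ih, homize_monomial]
      congr 1
      rw [Polynomial.coeff_C_mul, Polynomial.coeff_X_pow, homComp_monomial]
      split_ifs <;> simp_all

lemma eval_one_homize (p : MvPolynomial σ K) : Polynomial.eval 1 (homize p) = p := by
  have h : (Polynomial.evalRingHom (1 : MvPolynomial σ K)).comp
      (homize (K := K) (σ := σ) : MvPolynomial σ K →+* Polynomial (MvPolynomial σ K))
      = RingHom.id _ := by
    apply MvPolynomial.ringHom_ext
    · intro a; simp [homize]
    · intro i; simp [homize]
  exact RingHom.congr_fun h p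

lemma homize_ne_zero {p : MvPolynomial σ K} (hp : p ≠ 0) : homize p ≠ 0 := by
  intro h
  apply hp
  rw [← eval_one_homize p, h, Polynomial.eval_zero]

lemma natDegree_homize (p : MvPolynomial σ K) (hp : p ≠ 0) :
    (homize p).natDegree = p.totalDegree := by
  apply le_antisymm
  · rw [Polynomial.natDegree_le_iff_coeff_eq_zero]
    intro N hN
    rw [coeff_homize]
    exact homogeneousComponent_eq_zero N p hN
  · apply Polynomial.le_natDegree_of_ne_zero
    rw [coeff_homize]
    obtain ⟨m, hm, hdeg⟩ := Finset.exists_mem_eq_sup p.support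
      (MvPolynomial.support_nonempty.mpr hp) (fun s => s.sum fun _ e => e)
    intro h0
    have : coeff m (homogeneousComponent p.totalDegree p) = 0 := by rw [h0]; simp
    rw [coeff_homogeneousComponent] at this
    have hdm : Finsupp.degree m = p.totalDegree := by
      rw [MvPolynomial.totalDegree, hdeg]; rfl
    rw [if_pos hdm] at this
    exact (MvPolynomial.mem_support_iff.mp hm) this

end homize

section domain
variable [CommRing K] [IsDomain K]

lemma totalDegree_pow_eq (p : MvPolynomial σ K) (m : ℕ) :
    (p ^ m).totalDegree = m * p.totalDegree := by
  by_cases hp : p = 0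
  · subst hp
    rcases Nat.eq_zero_or_pos m with hm | hm
    · subst hm; simp
    · rw [zero_pow hm.ne', totalDegree_zero, mul_zero]
  · have hpm : p ^ m ≠ 0 := pow_ne_zero m hp
    rw [← natDegree_homize _ hpm, map_pow,
      Polynomial.natDegree_pow'
        (pow_ne_zero m (Polynomial.leadingCoeff_ne_zero.mpr (homize_ne_zero hp))),
      natDegree_homize _ hp]

end domain

section field
variable [Field K]

lemma totalDegree_C_mul (a : K) (ha : a ≠ 0) (p : MvPolynomial σ K) :
    (C a * p).totalDegree = p.totalDegree := by
  apply le_antisymm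
  · rw [← smul_eq_C_mul]; exact totalDegree_smul_le _ _
  · conv_lhs => rw [show p = C a⁻¹ * (C a * p) by
      rw [← mul_assoc, ← C_mul, inv_mul_cancel₀ ha, C_1, one_mul]]
    rw [← smul_eq_C_mul]
    exact totalDegree_smul_le _ _

end field

lemma fin_strong_induction {n : ℕ} {P : Fin n → Prop}
    (h : ∀ i : Fin n, (∀ j : Fin n, j < i → P j) → P i) : ∀ i, P i := by
  have key : ∀ m : ℕ, ∀ i : Fin n, (i : ℕ) < m → P i := by
    intro m
    induction m with
    | zero => intro i hi; omega
    | succ m ih =>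
      intro i hi
      exact h i fun j hj => ih j (by have := Fin.lt_def.mp hj; omega)
  intro i
  exact key ((i : ℕ) + 1) i (by omega)

noncomputable def Gdef {K : Type*} [Field K] {n : ℕ} (d : ℕ) (A : Matrix (Fin n) (Fin n) K) :
    Fin n → MvPolynomial (Fin n) K
  | i => X i - (∑ j ∈ (Finset.univ.filter (fun j => j < i)).attach,
      C (A i j.1) * Gdef d A j.1) ^ d
  termination_by i => i.1
  decreasing_by exact Fin.lt_def.mp (Finset.mem_filter.mp j.2).2

lemma Gdef_eq {K : Type*} [Field K] {n : ℕ} (d : ℕ) (A : Matrix (Fin n) (Fin n) K) (i : Fin n) :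
    Gdef d A i = X i -
      (∑ j ∈ Finset.univ.filter (fun j => j < i), C (A i j) * Gdef d A j) ^ d := by
  rw [Gdef, Finset.sum_attach (Finset.univ.filter (fun j => j < i))
    (fun j => C (A i j) * Gdef d A j)]

section main

variable {K : Type*} [Field K] {n : ℕ} {d : ℕ}
  (A : Matrix (Fin n) (Fin n) K)

lemma sum_trunc (hlow : ∀ i j : Fin n, i ≤ j → A i j = 0) (i : Fin n)
    (p : Fin n → MvPolynomial (Fin n) K) :
    ∑ j, C (A i j) * p j
      = ∑ j ∈ Finset.univ.filter (fun j => j < i), C (A i j) * p j := by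
  classical
  rw [← Finset.sum_filter_add_sum_filter_not Finset.univ (fun j => j < i)
    (fun j => C (A i j) * p j)]
  have h0 : ∑ j ∈ Finset.univ.filter (fun j => ¬ j < i), C (A i j) * p j = 0 := by
    apply Finset.sum_eq_zero
    intro j hj
    rw [hlow i j (le_of_not_gt (Finset.mem_filter.mp hj).2), map_zero, zero_mul]
  rw [h0, add_zero]

lemma Gzero (hd0 : d ≠ 0) (i : Fin n) (h0 : (i : ℕ) = 0) : Gdef d A i = X i := by
  rw [Gdef_eq]
  have he : Finset.univ.filter (fun j => j < i) = ∅ := by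
    apply Finset.filter_eq_empty_iff.mpr
    intro j _
    rw [Fin.lt_def]
    omega
  rw [he, Finset.sum_empty, zero_pow hd0, sub_zero]

lemma deg_G (hd : 2 ≤ d) (hsub : ∀ i j : Fin n, (j : ℕ) + 1 = (i : ℕ) → A i j ≠ 0) :
    ∀ i : Fin n, (Gdef d A i).totalDegree = d ^ (i : ℕ) := by
  classical
  have hd1 : 1 < d := by omega
  apply fin_strong_induction
  intro i ih
  rcases Nat.eq_zero_or_pos (i : ℕ) with h0 | hpos
  · rw [Gzero A (by omega) i h0, h0, pow_zero, totalDegree_X]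
  · obtain ⟨k, hk⟩ : ∃ k, (i : ℕ) = k + 1 := ⟨(i : ℕ) - 1, by omega⟩
    have hkn : k < n := by have := i.isLt; omega
    set i' : Fin n := ⟨k, hkn⟩ with hi'
    have hii' : i' < i := Fin.lt_def.mpr (by simp [hi']; omega)
    have hfilter : Finset.univ.filter (fun j => j < i)
        = insert i' (Finset.univ.filter (fun j => j < i')) := by
      ext j
      simp only [Finset.mem_filter, Finset.mem_insert, Finset.mem_univ, true_and,
        Fin.lt_def, Fin.ext_iff, hi']
      omega
    have hnotmem : i' ∉ Finset.univ.filter (fun j => j < i') := by simp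
    have hmain : (C (A i i') * Gdef d A i').totalDegree = d ^ k := by
      rw [totalDegree_C_mul _ (hsub i i' (by simp [hi']; omega)) _, ih i' hii']
    have hrest : (∑ j ∈ Finset.univ.filter (fun j => j < i'),
        C (A i j) * Gdef d A j).totalDegree < d ^ k := by
      apply lt_of_le_of_lt (totalDegree_finset_sum _ _)
      rw [Finset.sup_lt_iff (by positivity)]
      intro j hj
      have hji' : j < i' := (Finset.mem_filter.mp hj).2
      calc (C (A i j) * Gdef d A j).totalDegree ≤ (Gdef d A j).totalDegree := by
            rw [← smul_eq_C_mul]; exact totalDegree_smul_le _ _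
        _ = d ^ (j : ℕ) := ih j (lt_trans hji' hii')
        _ < d ^ k := Nat.pow_lt_pow_right hd1 (by
            have := Fin.lt_def.mp hji'; simpa [hi'] using this)
    have hS : (∑ j ∈ Finset.univ.filter (fun j => j < i),
        C (A i j) * Gdef d A j).totalDegree = d ^ k := by
      rw [hfilter, Finset.sum_insert hnotmem,
        totalDegree_add_eq_left_of_totalDegree_lt (by rw [hmain]; exact hrest), hmain]
    have hSd : (-((∑ j ∈ Finset.univ.filter (fun j => j < i),
        C (A i j) * Gdef d A j) ^ d)).totalDegree = d ^ (k + 1) := by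
      rw [totalDegree_neg, totalDegree_pow_eq, hS]
      exact (pow_succ' d k).symm
    rw [Gdef_eq, sub_eq_add_neg,
      totalDegree_add_eq_right_of_totalDegree_lt (by
        rw [hSd, totalDegree_X]
        exact Nat.one_lt_pow (by omega) hd1),
      hSd, hk]

end main

end Aux18

/-- Let `A` be strictly lower triangular with nonzero entries on the
subdiagonal. Then `F = x + (Ax)^{*d}` (with `d ≥ 2`) is invertible, its inverse `G`
satisfies `G₁ = x₁`, `Gᵢ = xᵢ - (A_{i1}G₁ + ⋯ + A_{i,i-1}G_{i-1})^d`, and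
`deg Gᵢ = d^{i-1}` for all `i`; in particular the inverse has degree `d^{n-1}`. -/
theorem inverse_of_triangular_powerLinear
    {K : Type*} [Field K] {n : ℕ} (hn : 0 < n) (d : ℕ) (hd : 2 ≤ d)
    (A : Matrix (Fin n) (Fin n) K)
    (hlow : ∀ i j : Fin n, i ≤ j → A i j = 0)
    (hsub : ∀ i j : Fin n, (j : ℕ) + 1 = (i : ℕ) → A i j ≠ 0)
    (F : Fin n → MvPolynomial (Fin n) K)
    (hF : F = fun i => X i + (∑ j, C (A i j) * X j) ^ d) :
    ∃ G : Fin n → MvPolynomial (Fin n) K, IsPolyInverse G F ∧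
      (∀ i : Fin n, (i : ℕ) = 0 → G i = X i) ∧
      (∀ i : Fin n, 0 < (i : ℕ) →
        G i = X i - (∑ j ∈ Finset.univ.filter fun j => j < i, C (A i j) * G j) ^ d) ∧
      (∀ i : Fin n, (G i).totalDegree = d ^ (i : ℕ)) ∧
      (Finset.univ.sup fun i => (G i).totalDegree) = d ^ (n - 1) := by
  classical
  refine ⟨Aux18.Gdef d A, ⟨?_, ?_⟩, ?_, ?_, ?_, ?_⟩
  · -- bind₁ F (G i) = X i
    apply Aux18.fin_strong_induction
    intro i ih
    rw [Aux18.Gdef_eq, map_sub, bind₁_X_right, map_pow]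
    rw [show (bind₁ F) (∑ j ∈ Finset.univ.filter (fun j => j < i),
        C (A i j) * Aux18.Gdef d A j)
        = ∑ j ∈ Finset.univ.filter (fun j => j < i), C (A i j) * X j by
      rw [map_sum]
      refine Finset.sum_congr rfl fun j hj => ?_
      rw [map_mul, bind₁_C_right, ih j (Finset.mem_filter.mp hj).2]]
    rw [← Aux18.sum_trunc A hlow i X, hF]
    simp
  · -- bind₁ G (F i) = X i
    intro i
    subst hF
    simp only [map_add, bind₁_X_right, map_pow, map_sum, map_mul, bind₁_C_right]
    rw [Aux18.sum_trunc A hlow i (Aux18.Gdef d A)]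
    conv_lhs => rw [Aux18.Gdef_eq]
    ring
  · exact Aux18.Gzero A (by omega)
  · intro i _
    exact Aux18.Gdef_eq d A i
  · exact Aux18.deg_G A hd hsub
  · apply le_antisymm
    · apply Finset.sup_le
      intro i _
      rw [Aux18.deg_G A hd hsub i]
      exact Nat.pow_le_pow_right (by omega) (by have := i.isLt; omega)
    · have hle := Finset.le_sup (f := fun i => (Aux18.Gdef d A i).totalDegree)
        (Finset.mem_univ (⟨n - 1, by omega⟩ : Fin n))
      simpa [Aux18.deg_G A hd hsub] using hle
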